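/- Every twice-differentiable solution φ of the damped Duffing equation converges to a constant equilibrium: there exists L ∈ {−1, 0, 1} such that φ(t) → L and φ′(t) → 0 as t → +∞. -/

import Mathlib

open Filter

set_option maxHeartbeats 1600000 in
open Set in
/-- Every twice-differentiable solution of the damped Duffing equation
`φ'' + k φ' + c (φ³ − φ) = 0` (for `t ≥ 0`, with `k, c > 0`) converges to a constant
equilibrium `L ∈ {−1, 0, 1}`, and its derivative converges to `0`, as `t → +∞`. -/
theorem duffing_convergence_to_equilibrium (k c : ℝ) (hk : 0 < k) (hc : 0 < c)
    (φ : ℝ → ℝ) (hφ : Differentiable ℝ φ) (hφ' : Differentiable ℝ (deriv φ))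
    (hode : ∀ t : ℝ, 0 ≤ t →
      deriv (deriv φ) t + k * deriv φ t + c * ((φ t) ^ 3 - φ t) = 0) :
    ∃ L ∈ ({-1, 0, 1} : Set ℝ),
      Tendsto φ atTop (nhds L) ∧ Tendsto (deriv φ) atTop (nhds 0) := by
  have hφc : Continuous φ := hφ.continuous
  have hfc : Continuous (deriv φ) := hφ'.continuous
  set E : ℝ → ℝ := fun t => (deriv φ t)^2/2 + c*((φ t)^4/4 - (φ t)^2/2) with hEdef
  clear_value E
  have hEval : ∀ t : ℝ, E t = (deriv φ t)^2/2 + c*((φ t)^4/4 - (φ t)^2/2) := by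
    intro t; rw [hEdef]
  have hEc : Continuous E := by
    rw [hEdef]
    apply Continuous.add
    · exact (hfc.pow 2).div_const 2
    · exact continuous_const.mul (((hφc.pow 4).div_const 4).sub ((hφc.pow 2).div_const 2))
  -- derivative of the energy
  have hEd : ∀ t : ℝ, HasDerivAt E
      (deriv φ t * deriv (deriv φ) t + c * ((φ t)^3 - φ t) * deriv φ t) t := by
    intro t
    rw [hEdef]
    have h1 : HasDerivAt (fun u => (deriv φ u)^2/2) (deriv φ t * deriv (deriv φ) t) t := by
      have h := ((hφ' t).hasDerivAt.pow 2).div_const 2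
      exact h.congr_deriv (by push_cast; ring)
    have h2 : HasDerivAt (fun u => c*((φ u)^4/4 - (φ u)^2/2))
        (c * ((φ t)^3 - φ t) * deriv φ t) t := by
      have h := ((((hφ t).hasDerivAt.pow 4).div_const 4).sub
        (((hφ t).hasDerivAt.pow 2).div_const 2)).const_mul c
      exact h.congr_deriv (by push_cast; ring)
    exact h1.add h2
  have hEd' : ∀ t : ℝ, 0 ≤ t → HasDerivAt E (-k * (deriv φ t)^2) t := by
    intro t ht
    have h := hEd t
    have ho := hode t ht
    have heq : deriv φ t * deriv (deriv φ) t + c * ((φ t)^3 - φ t) * deriv φ t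
        = -k * (deriv φ t)^2 := by linear_combination (deriv φ t) * ho
    rwa [heq] at h
  -- fundamental theorem of calculus for E
  have hFTC : ∀ a b : ℝ, 0 ≤ a → a ≤ b →
      (∫ s in a..b, (-k * (deriv φ s)^2)) = E b - E a := by
    intro a b ha hab
    refine intervalIntegral.integral_eq_sub_of_hasDerivAt (fun x hx => ?_) ?_
    · refine hEd' x ?_
      rw [Set.uIcc_of_le hab] at hx
      exact le_trans ha hx.1
    · exact (continuous_const.mul (hfc.pow 2)).intervalIntegrable _ _
  -- E is antitone on [0, ∞)
  have hEanti : AntitoneOn E (Ici (0:ℝ)) := by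
    apply antitoneOn_of_deriv_nonpos (convex_Ici 0) hEc.continuousOn
    · intro x hx
      rw [interior_Ici] at hx
      exact ((hEd x).differentiableAt).differentiableWithinAt
    · intro x hx
      rw [interior_Ici] at hx
      rw [(hEd' x (le_of_lt hx)).deriv]
      nlinarith [sq_nonneg (deriv φ x)]
  -- lower bound on the energy
  have hElb : ∀ t : ℝ, -c/4 ≤ E t := by
    intro t
    rw [hEval t]
    nlinarith [sq_nonneg ((φ t)^2 - 1), sq_nonneg (deriv φ t)]
  -- the energy converges
  set F : ℝ → ℝ := fun t => E (max t 0) with hFdef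
  clear_value F
  have hFval : ∀ t : ℝ, F t = E (max t 0) := by intro t; rw [hFdef]
  have hFanti : Antitone F := by
    intro a b hab
    rw [hFval a, hFval b]
    exact hEanti (Set.mem_Ici.2 (le_max_right a 0)) (Set.mem_Ici.2 (le_max_right b 0))
      (max_le_max hab le_rfl)
  have hFbdd : BddBelow (Set.range F) := by
    refine ⟨-c/4, ?_⟩
    rintro y ⟨t, rfl⟩
    rw [hFval t]
    exact hElb _
  set Einf : ℝ := ⨅ t, F t with hEinf
  clear_value Einf
  have hFtend : Tendsto F atTop (nhds Einf) := hEinf ▸ tendsto_atTop_ciInf hFanti hFbdd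
  have hEtend : Tendsto E atTop (nhds Einf) := by
    apply hFtend.congr'
    filter_upwards [eventually_ge_atTop (0:ℝ)] with t ht
    rw [hFval t, max_eq_left ht]
  have hEinf_lb : -c/4 ≤ Einf := hEinf ▸ le_ciInf fun t => by rw [hFval t]; exact hElb _
  -- bounds on φ and deriv φ
  set E0 : ℝ := E 0 with hE0def
  clear_value E0
  have hEle : ∀ t : ℝ, 0 ≤ t → E t ≤ E0 :=
    fun t ht => hE0def ▸ hEanti (Set.self_mem_Ici) (Set.mem_Ici.2 ht) ht
  have hE0lb : -c/4 ≤ E0 := hE0def ▸ hElb 0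
  set M : ℝ := Real.sqrt (1 + Real.sqrt (4*E0/c + 1)) with hMdef
  clear_value M
  have hM0 : 0 ≤ M := hMdef ▸ Real.sqrt_nonneg _
  have hM : ∀ t : ℝ, 0 ≤ t → |φ t| ≤ M := by
    intro t ht
    have hEt := hEval t
    have h1 : c*((φ t)^4/4 - (φ t)^2/2) ≤ E0 := by
      have := hEle t ht
      nlinarith [sq_nonneg (deriv φ t)]
    have h2 : ((φ t)^2 - 1)^2 ≤ 4*E0/c + 1 := by
      have he : (4*E0/c + 1) = (4*E0 + c)/c := by field_simp
      rw [he, le_div_iff₀ hc]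
      nlinarith
    have h3 : |(φ t)^2 - 1| ≤ Real.sqrt (4*E0/c + 1) := Real.abs_le_sqrt h2
    have h4 : (φ t)^2 ≤ 1 + Real.sqrt (4*E0/c+1) := by
      have := (abs_le.1 h3).2
      linarith
    calc |φ t| = Real.sqrt ((φ t)^2) := (Real.sqrt_sq_eq_abs _).symm
      _ ≤ M := hMdef ▸ Real.sqrt_le_sqrt h4
  set M' : ℝ := Real.sqrt (2*E0 + c/2) with hM'def
  clear_value M'
  have hM'0 : 0 ≤ M' := hM'def ▸ Real.sqrt_nonneg _
  have hM' : ∀ t : ℝ, 0 ≤ t → |deriv φ t| ≤ M' := by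
    intro t ht
    have hEt := hEval t
    have h1 : (deriv φ t)^2 ≤ 2*E0 + c/2 := by
      have := hEle t ht
      nlinarith [sq_nonneg ((φ t)^2 - 1)]
    calc |deriv φ t| = Real.sqrt ((deriv φ t)^2) := (Real.sqrt_sq_eq_abs _).symm
      _ ≤ M' := hM'def ▸ Real.sqrt_le_sqrt h1
  -- bound on second derivative
  set B2 : ℝ := k*M' + c*(M^3 + M) with hB2def
  clear_value B2
  have hB2nn : 0 ≤ B2 := by
    have h1 : 0 ≤ k*M' := mul_nonneg hk.le hM'0
    have h2 : 0 ≤ c*(M^3+M) := mul_nonneg hc.le (add_nonneg (pow_nonneg hM0 3) hM0)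
    rw [hB2def]; linarith
  have hB2 : ∀ t : ℝ, 0 ≤ t → |deriv (deriv φ) t| ≤ B2 := by
    intro t ht
    have ho := hode t ht
    have heq : deriv (deriv φ) t = -(k * deriv φ t) + -(c*((φ t)^3 - φ t)) := by linarith
    rw [heq]
    have htr := abs_add_le (-(k * deriv φ t)) (-(c*((φ t)^3 - φ t)))
    rw [abs_neg, abs_neg] at htr
    have h1 : |k * deriv φ t| ≤ k * M' := by
      rw [abs_mul, abs_of_pos hk]
      exact mul_le_mul_of_nonneg_left (hM' t ht) hk.le
    have h2 : |c*((φ t)^3 - φ t)| ≤ c*(M^3 + M) := by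
      rw [abs_mul, abs_of_pos hc]
      refine mul_le_mul_of_nonneg_left ?_ hc.le
      have := abs_sub ((φ t)^3) (φ t)
      have h3 : |(φ t)^3| = |φ t|^3 := abs_pow _ _
      have h4 : |φ t|^3 ≤ M^3 := pow_le_pow_left₀ (abs_nonneg _) (hM t ht) 3
      have h5 := hM t ht
      linarith
    calc |(-(k * deriv φ t) + -(c*((φ t)^3 - φ t)))|
        ≤ |k * deriv φ t| + |c*((φ t)^3 - φ t)| := htr
      _ ≤ B2 := by rw [hB2def]; linarith
  -- Lipschitz bound on (deriv φ)^2 via FTC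
  set B : ℝ := 2*M'*B2 + 1 with hBdef
  clear_value B
  have hB0 : 0 < B := by
    have h1 : 0 ≤ 2*M'*B2 := mul_nonneg (by linarith) hB2nn
    rw [hBdef]; linarith
  have hgd : ∀ x : ℝ, HasDerivAt (fun u => (deriv φ u)^2)
      (2 * deriv φ x * deriv (deriv φ) x) x := by
    intro x
    have h := (hφ' x).hasDerivAt.pow 2
    exact h.congr_deriv (by push_cast; ring)
  have hgdc : ∀ a b : ℝ, 0 ≤ a → a ≤ b →
      ContinuousOn (fun x => 2 * deriv φ x * deriv (deriv φ) x) (Set.Icc a b) := by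
    intro a b ha hab
    have heqon : Set.EqOn (fun x => 2 * deriv φ x * (-(k * deriv φ x) - c*((φ x)^3 - φ x)))
        (fun x => 2 * deriv φ x * deriv (deriv φ) x) (Set.Icc a b) := by
      intro x hx
      have ho := hode x (ha.trans hx.1)
      simp only
      have : deriv (deriv φ) x = -(k * deriv φ x) - c*((φ x)^3 - φ x) := by linarith
      rw [this]
    refine ContinuousOn.congr ?_ heqon.symm
    exact ((continuous_const.mul hfc).mul (((continuous_const.mul hfc).neg).sub
      (continuous_const.mul ((hφc.pow 3).sub hφc)))).continuousOn
  have hglip : ∀ a b : ℝ, 0 ≤ a → a ≤ b →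
      |(deriv φ b)^2 - (deriv φ a)^2| ≤ B * (b - a) := by
    intro a b ha hab
    have hint : IntervalIntegrable (fun x => 2 * deriv φ x * deriv (deriv φ) x)
        MeasureTheory.volume a b := by
      apply ContinuousOn.intervalIntegrable
      rw [Set.uIcc_of_le hab]
      exact hgdc a b ha hab
    have heq := intervalIntegral.integral_eq_sub_of_hasDerivAt
      (f := fun u => (deriv φ u)^2) (fun x _ => hgd x) hint
    calc |(deriv φ b)^2 - (deriv φ a)^2|
        = ‖∫ x in a..b, 2 * deriv φ x * deriv (deriv φ) x‖ := by
          rw [heq, Real.norm_eq_abs]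
      _ ≤ B * |b - a| := by
          apply intervalIntegral.norm_integral_le_of_norm_le_const
          intro x hx
          rw [Set.uIoc_of_le hab] at hx
          have hx0 : 0 ≤ x := le_trans ha hx.1.le
          have h1 := hM' x hx0
          have h2 := hB2 x hx0
          rw [Real.norm_eq_abs, abs_mul, abs_mul, abs_two, hBdef]
          nlinarith [abs_nonneg (deriv φ x), abs_nonneg (deriv (deriv φ) x)]
      _ = B * (b - a) := by rw [abs_of_nonneg (by linarith)]
  -- Barbalat: (deriv φ)^2 → 0
  have hg0 : Tendsto (fun t => (deriv φ t)^2) atTop (nhds 0) := by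
    by_contra hcon
    rw [NormedAddCommGroup.tendsto_nhds_zero] at hcon
    push_neg at hcon
    obtain ⟨ε, hε, hfreq⟩ := hcon
    have hfreq : ∃ᶠ x in atTop, ¬ ‖deriv φ x ^ 2‖ < ε := hfreq.mono fun x hx => not_lt.2 hx
    set δ : ℝ := min 1 (ε/(2*B)) with hδdef
    clear_value δ
    have hδ0 : 0 < δ := by
      rw [hδdef]; exact lt_min one_pos (div_pos hε (by linarith))
    have hwin : Tendsto (fun t => E (t - δ) - E (t + δ)) atTop (nhds 0) := by
      have h1 : Tendsto (fun t : ℝ => E (t - δ)) atTop (nhds Einf) :=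
        hEtend.comp (tendsto_atTop_add_const_right _ (-δ) tendsto_id |>.congr
          (fun t => by simp only [id_eq]; ring))
      have h2 : Tendsto (fun t : ℝ => E (t + δ)) atTop (nhds Einf) :=
        hEtend.comp (tendsto_atTop_add_const_right _ δ tendsto_id)
      have h := h1.sub h2
      rwa [sub_self] at h
    have hev : ∀ᶠ t in atTop, E (t - δ) - E (t + δ) < k*ε*δ ∧ δ ≤ t := by
      have hpos : 0 < k*ε*δ := by positivity
      filter_upwards [hwin.eventually_lt_const hpos, eventually_ge_atTop δ] with t h1 h2
      exact ⟨h1, h2⟩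
    obtain ⟨t, ht1, hlt, hδt⟩ := (hfreq.and_eventually hev).exists
    have hgt : ε ≤ (deriv φ t)^2 := by
      have h := not_lt.1 ht1
      rwa [Real.norm_eq_abs, abs_of_nonneg (sq_nonneg _)] at h
    have ha0 : 0 ≤ t - δ := by linarith
    have hlow : ∀ s ∈ Set.Icc (t-δ) (t+δ), ε/2 ≤ (deriv φ s)^2 := by
      intro s hs
      have hs0 : 0 ≤ s := le_trans ha0 hs.1
      have hBδ : B*δ ≤ ε/2 := by
        have hδle : δ ≤ ε/(2*B) := by rw [hδdef]; exact min_le_right _ _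
        calc B*δ ≤ B*(ε/(2*B)) := by nlinarith
          _ = ε/2 := by field_simp
      have hlip : |(deriv φ t)^2 - (deriv φ s)^2| ≤ ε/2 := by
        rcases le_total s t with h | h
        · have hl := hglip s t hs0 h
          have : B*(t-s) ≤ B*δ := by nlinarith [hs.1]
          linarith
        · have hl := hglip t s (by linarith) h
          rw [abs_sub_comm]
          have : B*(s-t) ≤ B*δ := by nlinarith [hs.2]
          linarith
      have := (abs_le.1 hlip).2
      linarith
    have hEi := hFTC (t-δ) (t+δ) ha0 (by linarith)
    have hintg : IntervalIntegrable (fun s => -k * (deriv φ s)^2)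
        MeasureTheory.volume (t-δ) (t+δ) :=
      (continuous_const.mul (hfc.pow 2)).intervalIntegrable _ _
    have hcmp : (∫ s in (t-δ)..(t+δ), (-k * (deriv φ s)^2))
        ≤ ∫ _s in (t-δ)..(t+δ), (-(k*ε/2)) := by
      apply intervalIntegral.integral_mono_on (by linarith) hintg
        intervalIntegrable_const
      intro x hx
      have := hlow x hx
      nlinarith
    rw [hEi, intervalIntegral.integral_const] at hcmp
    have hsimp : ((t+δ) - (t-δ)) • (-(k*ε/2)) = -(k*ε*δ) := by
      rw [smul_eq_mul]; ring
    rw [hsimp] at hcmp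
    linarith
  -- deriv φ → 0
  have hf0 : Tendsto (deriv φ) atTop (nhds 0) := by
    have hsq : Tendsto (fun t => Real.sqrt ((deriv φ t)^2)) atTop (nhds 0) :=
      (Real.continuous_sqrt.tendsto' 0 0 (by simp)).comp hg0
    exact squeeze_zero_norm
      (fun t => le_of_eq (by rw [Real.norm_eq_abs, Real.sqrt_sq_eq_abs])) hsq
  -- the potential converges to Einf
  have hVtend : Tendsto (fun t => c*((φ t)^4/4 - (φ t)^2/2)) atTop (nhds Einf) := by
    have h : Tendsto (fun t => E t - (deriv φ t)^2/2) atTop (nhds (Einf - 0/2)) :=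
      hEtend.sub (hg0.div_const 2)
    norm_num at h
    apply h.congr
    intro t
    simp only [hEdef]
    ring
  -- the set of critical values is finite
  set S : Set ℝ := {x : ℝ | c*(x^4/4 - x^2/2) = Einf} with hSdef
  have hSfin : S.Finite := by
    set q : ℝ := (4*Einf + c)/c with hqdef
    apply Set.Finite.subset (Set.toFinite
      ({Real.sqrt (1 + Real.sqrt q), -Real.sqrt (1 + Real.sqrt q),
        Real.sqrt (1 - Real.sqrt q), -Real.sqrt (1 - Real.sqrt q)} : Set ℝ))
    intro x hx
    have hx' : c*(x^4/4 - x^2/2) = Einf := hx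
    have h1 : (x^2 - 1)^2 = q := by
      rw [hqdef]; field_simp; linear_combination 4*hx'
    have h2 : |x^2 - 1| = Real.sqrt q := by
      rw [← h1, Real.sqrt_sq_eq_abs]
    have h3 : x = Real.sqrt (x^2) ∨ x = -Real.sqrt (x^2) := by
      rcases abs_cases x with ⟨h, _⟩ | ⟨h, _⟩
      · left; rw [Real.sqrt_sq_eq_abs, h]
      · right; rw [Real.sqrt_sq_eq_abs, h]; ring
    rcases (abs_eq (Real.sqrt_nonneg q)).1 h2 with h4 | h4
    · have hx2 : x^2 = 1 + Real.sqrt q := by linarith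
      rcases h3 with h5 | h5
      · left; rw [h5, hx2]
      · right; left; rw [h5, hx2]
    · have hx2 : x^2 = 1 - Real.sqrt q := by linarith
      rcases h3 with h5 | h5
      · right; right; left; rw [h5, hx2]
      · right; right; right; rw [h5, hx2]; rfl
  -- separation of the finite set S
  have hsep : ∃ ε₀ : ℝ, 0 < ε₀ ∧ ∀ s ∈ S, ∀ s' ∈ S, s ≠ s' → 3*ε₀ ≤ |s - s'| := by
    by_cases hne : (hSfin.toFinset.offDiag).Nonempty
    · have hDne : ((hSfin.toFinset.offDiag).image
          (fun p => |p.1 - p.2|)).Nonempty := hne.image _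
      obtain ⟨p, hp, hpe⟩ := Finset.mem_image.1 (Finset.min'_mem _ hDne)
      have hm0 : 0 < ((hSfin.toFinset.offDiag).image (fun p => |p.1 - p.2|)).min' hDne := by
        rw [← hpe]
        exact abs_pos.2 (sub_ne_zero.2 (Finset.mem_offDiag.1 hp).2.2)
      refine ⟨((hSfin.toFinset.offDiag).image (fun p => |p.1 - p.2|)).min' hDne / 3,
        by linarith, ?_⟩
      intro s hs s' hs' hne'
      have hmemD : |s - s'| ∈ (hSfin.toFinset.offDiag).image (fun p => |p.1 - p.2|) :=
        Finset.mem_image.2 ⟨(s, s'), Finset.mem_offDiag.2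
          ⟨hSfin.mem_toFinset.2 hs, hSfin.mem_toFinset.2 hs', hne'⟩, rfl⟩
      have := Finset.min'_le _ _ hmemD
      linarith
    · refine ⟨1, one_pos, fun s hs s' hs' hne' => absurd ?_ hne⟩
      exact ⟨(s, s'), Finset.mem_offDiag.2
        ⟨hSfin.mem_toFinset.2 hs, hSfin.mem_toFinset.2 hs', hne'⟩⟩
  -- for every ε > 0, eventually φ t is ε-close to S
  have hnear : ∀ ε : ℝ, 0 < ε → ∀ᶠ t in atTop, ∃ s ∈ S, |φ t - s| < ε := by
    intro ε hε
    set K : Set ℝ := Set.Icc (-M) M ∩ {x : ℝ | ∀ s ∈ S, ε ≤ |x - s|} with hKdef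
    have hKclosed : IsClosed {x : ℝ | ∀ s ∈ S, ε ≤ |x - s|} := by
      have heq : {x : ℝ | ∀ s ∈ S, ε ≤ |x - s|} = ⋂ s ∈ S, {x : ℝ | ε ≤ |x - s|} := by
        ext x; simp
      rw [heq]
      exact isClosed_biInter fun s _ =>
        isClosed_le continuous_const ((continuous_id.sub continuous_const).abs)
    have hKc : IsCompact K := isCompact_Icc.inter_right hKclosed
    by_cases hKne : K.Nonempty
    · have hWc : ContinuousOn (fun x : ℝ => |c*(x^4/4 - x^2/2) - Einf|) K := by
        apply Continuous.continuousOn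
        exact ((continuous_const.mul (((continuous_pow 4).div_const 4).sub
          ((continuous_pow 2).div_const 2))).sub continuous_const).abs
      obtain ⟨x₀, hx₀K, hx₀min⟩ := hKc.exists_isMinOn hKne hWc
      set η : ℝ := |c*(x₀^4/4 - x₀^2/2) - Einf| with hηdef
      have hη0 : 0 < η := by
        rcases (abs_nonneg (c*(x₀^4/4 - x₀^2/2) - Einf)).lt_or_eq with h | h
        · exact h
        · exfalso
          have hx₀S : x₀ ∈ S := by
            rw [hSdef]; simp only [Set.mem_setOf_eq]
            have := abs_eq_zero.1 h.symm
            linarith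
          have := hx₀K.2 x₀ hx₀S
          simp at this
          linarith
      filter_upwards [eventually_ge_atTop (0:ℝ), Metric.tendsto_nhds.1 hVtend η hη0]
        with t ht hd
      by_contra hno
      push_neg at hno
      have hmem : φ t ∈ K := by
        refine ⟨?_, fun s hs => hno s hs⟩
        have := abs_le.1 (hM t ht)
        exact ⟨this.1, this.2⟩
      have hmin := hx₀min hmem
      rw [Real.dist_eq] at hd
      simp only [hηdef] at hmin
      exact absurd hd (not_lt.2 hmin)
    · filter_upwards [eventually_ge_atTop (0:ℝ)] with t ht
      by_contra hno
      push_neg at hno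
      refine hKne ⟨φ t, ⟨?_, fun s hs => hno s hs⟩⟩
      have := abs_le.1 (hM t ht)
      exact ⟨this.1, this.2⟩
  -- trapping near a single point s₀ of S
  obtain ⟨ε₀, hε₀, hsep3⟩ := hsep
  obtain ⟨T₀, hT₀⟩ := eventually_atTop.1 (hnear ε₀ hε₀)
  obtain ⟨s₀, hs₀S, hs₀⟩ := hT₀ T₀ le_rfl
  have hstay : ∀ t : ℝ, T₀ ≤ t → |φ t - s₀| < ε₀ := by
    intro t ht
    by_contra hfar
    obtain ⟨s₁, hs₁S, hs₁⟩ := hT₀ t ht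
    have hne : s₁ ≠ s₀ := by rintro rfl; exact hfar hs₁
    have hgap := hsep3 s₀ hs₀S s₁ hs₁S (Ne.symm hne)
    have habs0 := abs_lt.1 hs₀
    have habs1 := abs_lt.1 hs₁
    rcases lt_or_gt_of_ne (show s₀ ≠ s₁ from Ne.symm hne) with hlt | hgt
    · -- s₀ < s₁
      have hgap' : 3*ε₀ ≤ s₁ - s₀ := by
        rwa [abs_of_neg (by linarith), neg_sub] at hgap
      have h1 : φ T₀ ≤ s₀ + 3/2*ε₀ := by linarith
      have h2 : s₀ + 3/2*ε₀ ≤ φ t := by linarith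
      obtain ⟨u, hu, huz⟩ := intermediate_value_Icc ht hφc.continuousOn ⟨h1, h2⟩
      obtain ⟨s₂, hs₂S, hs₂⟩ := hT₀ u hu.1
      rw [huz] at hs₂
      by_cases h20 : s₂ = s₀
      · rw [h20] at hs₂
        rw [show s₀ + 3/2*ε₀ - s₀ = 3/2*ε₀ by ring, abs_of_pos (show (0:ℝ) < 3/2*ε₀ by linarith)] at hs₂
        linarith
      · have h3 := hsep3 s₂ hs₂S s₀ hs₀S h20
        have h4 : |s₂ - s₀| ≤ |s₀ + 3/2*ε₀ - s₂| + |s₀ + 3/2*ε₀ - s₀| := by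
          have h5 := abs_sub (s₀ + 3/2*ε₀ - s₀) (s₀ + 3/2*ε₀ - s₂)
          have he : (s₀ + 3/2*ε₀ - s₀) - (s₀ + 3/2*ε₀ - s₂) = s₂ - s₀ := by ring
          rw [he] at h5
          linarith [abs_sub_comm (s₀ + 3/2*ε₀ - s₀) (s₀ + 3/2*ε₀ - s₂)]
        rw [show s₀ + 3/2*ε₀ - s₀ = 3/2*ε₀ by ring, abs_of_pos (show (0:ℝ) < 3/2*ε₀ by linarith)] at h4
        linarith
    · -- s₁ < s₀
      have hgap' : 3*ε₀ ≤ s₀ - s₁ := by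
        rwa [abs_of_pos (by linarith)] at hgap
      have h1 : s₀ - 3/2*ε₀ ≤ φ T₀ := by linarith
      have h2 : φ t ≤ s₀ - 3/2*ε₀ := by linarith
      obtain ⟨u, hu, huz⟩ := intermediate_value_Icc' ht hφc.continuousOn ⟨h2, h1⟩
      obtain ⟨s₂, hs₂S, hs₂⟩ := hT₀ u hu.1
      rw [huz] at hs₂
      by_cases h20 : s₂ = s₀
      · rw [h20] at hs₂
        rw [show s₀ - 3/2*ε₀ - s₀ = -(3/2*ε₀) by ring, abs_neg,
          abs_of_pos (show (0:ℝ) < 3/2*ε₀ by linarith)] at hs₂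
        linarith
      · have h3 := hsep3 s₂ hs₂S s₀ hs₀S h20
        have h4 : |s₂ - s₀| ≤ |s₀ - 3/2*ε₀ - s₂| + |s₀ - 3/2*ε₀ - s₀| := by
          have h5 := abs_sub (s₀ - 3/2*ε₀ - s₀) (s₀ - 3/2*ε₀ - s₂)
          have he : (s₀ - 3/2*ε₀ - s₀) - (s₀ - 3/2*ε₀ - s₂) = s₂ - s₀ := by ring
          rw [he] at h5
          linarith [abs_sub_comm (s₀ - 3/2*ε₀ - s₀) (s₀ - 3/2*ε₀ - s₂)]
        rw [show s₀ - 3/2*ε₀ - s₀ = -(3/2*ε₀) by ring, abs_neg,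
          abs_of_pos (show (0:ℝ) < 3/2*ε₀ by linarith)] at h4
        linarith
  -- convergence of φ to s₀
  have hφtend : Tendsto φ atTop (nhds s₀) := by
    rw [Metric.tendsto_nhds]
    intro ε hε
    have hε' : 0 < min ε ε₀ := lt_min hε hε₀
    filter_upwards [hnear _ hε', eventually_ge_atTop T₀] with t hnt ht
    obtain ⟨s, hsS, hss⟩ := hnt
    have hst := hstay t ht
    have hseq : s = s₀ := by
      by_contra hne
      have h3 := hsep3 s hsS s₀ hs₀S hne
      have h4 : |s - s₀| ≤ |φ t - s| + |φ t - s₀| := by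
        have := abs_sub (φ t - s₀) (φ t - s)
        have he : (φ t - s₀) - (φ t - s) = s - s₀ := by ring
        rw [he] at this
        linarith [this, abs_sub_comm (φ t - s₀) (φ t - s)]
      have h5 : min ε ε₀ ≤ ε₀ := min_le_right _ _
      linarith
    rw [Real.dist_eq, ← hseq]
    exact lt_of_lt_of_le hss (min_le_left _ _)
  -- s₀ is an equilibrium
  have hcube : s₀^3 - s₀ = 0 := by
    by_contra hne0
    set a : ℝ := c*(s₀^3 - s₀) with hadef
    have ha0 : a ≠ 0 := mul_ne_zero (ne_of_gt hc) hne0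
    have haabs : 0 < |a| := abs_pos.2 ha0
    have htend2 : Tendsto (fun t => deriv (deriv φ) t + a) atTop (nhds 0) := by
      have hφ3 : Tendsto (fun t => c*((φ t)^3 - φ t)) atTop (nhds a) := by
        rw [hadef]
        exact (((hφtend.pow 3).sub hφtend).const_mul c)
      have h1 : Tendsto (fun t => -(k * deriv φ t) - c*((φ t)^3 - φ t) + a)
          atTop (nhds (-(k*0) - a + a)) :=
        (((hf0.const_mul k).neg).sub hφ3).add tendsto_const_nhds
      norm_num at h1
      apply h1.congr'
      filter_upwards [eventually_ge_atTop (0:ℝ)] with t ht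
      have ho := hode t ht
      have : deriv (deriv φ) t = -(k * deriv φ t) - c*((φ t)^3 - φ t) := by linarith
      rw [this]
    have hev : ∀ᶠ s in atTop,
        |deriv (deriv φ) s + a| ≤ |a|/2 ∧ |deriv φ s| ≤ |a|/16 ∧ (0:ℝ) ≤ s := by
      have h1 : ∀ᶠ s in atTop, |deriv (deriv φ) s + a| < |a|/2 := by
        have := Metric.tendsto_nhds.1 htend2 (|a|/2) (by linarith)
        filter_upwards [this] with s hs
        rwa [Real.dist_eq, sub_zero] at hs
      have h2 : ∀ᶠ s in atTop, |deriv φ s| < |a|/16 := by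
        have := Metric.tendsto_nhds.1 hf0 (|a|/16) (by linarith)
        filter_upwards [this] with s hs
        rwa [Real.dist_eq, sub_zero] at hs
      filter_upwards [h1, h2, eventually_ge_atTop (0:ℝ)] with s hs1 hs2 hs3
      exact ⟨hs1.le, hs2.le, hs3⟩
    obtain ⟨T, hT⟩ := eventually_atTop.1 hev
    have hintc : ContinuousOn (fun x => deriv (deriv φ) x + a) (Set.Icc T (T+1)) := by
      have hT0 : 0 ≤ T := (hT T le_rfl).2.2
      have heqon : Set.EqOn (fun x => -(k * deriv φ x) - c*((φ x)^3 - φ x) + a)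
          (fun x => deriv (deriv φ) x + a) (Set.Icc T (T+1)) := by
        intro x hx
        have ho := hode x (hT0.trans hx.1)
        simp only
        have : deriv (deriv φ) x = -(k * deriv φ x) - c*((φ x)^3 - φ x) := by linarith
        rw [this]
      refine ContinuousOn.congr ?_ heqon.symm
      exact ((((continuous_const.mul hfc).neg).sub
        (continuous_const.mul ((hφc.pow 3).sub hφc))).add continuous_const).continuousOn
    have hFTC2 : (∫ s in T..(T+1), (deriv (deriv φ) s + a))
        = (deriv φ (T+1) + a*(T+1)) - (deriv φ T + a*T) := by
      refine intervalIntegral.integral_eq_sub_of_hasDerivAt (f := fun u => deriv φ u + a*u)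
        (fun x _ => ?_) ?_
      · have h1 : HasDerivAt (fun u => deriv φ u + a*u) (deriv (deriv φ) x + a) x := by
          have ha' : HasDerivAt (fun u : ℝ => a*u) a x := by
            have := (hasDerivAt_id x).const_mul a
            simpa using this
          exact (hφ' x).hasDerivAt.add ha'
        exact h1
      · apply ContinuousOn.intervalIntegrable
        rw [Set.uIcc_of_le (by linarith : T ≤ T+1)]
        exact hintc
    have hbound : |(deriv φ (T+1) + a*(T+1)) - (deriv φ T + a*T)| ≤ |a|/2 * |(T+1) - T| := by
      rw [← hFTC2, ← Real.norm_eq_abs]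
      apply intervalIntegral.norm_integral_le_of_norm_le_const
      intro x hx
      rw [Set.uIoc_of_le (by linarith : T ≤ T+1)] at hx
      rw [Real.norm_eq_abs]
      exact (hT x hx.1.le).1
    have hTsimp : |(T+1) - T| = 1 := by norm_num
    rw [hTsimp, mul_one] at hbound
    have hkey : |deriv φ (T+1) - deriv φ T + a| ≤ |a|/2 := by
      have he : (deriv φ (T+1) + a*(T+1)) - (deriv φ T + a*T)
          = deriv φ (T+1) - deriv φ T + a := by ring
      rwa [he] at hbound
    have h2 := (hT T le_rfl).2.1
    have h2' := (hT (T+1) (by linarith)).2.1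
    have hx1 := abs_le.1 hkey
    have hx2 := abs_le.1 h2
    have hx3 := abs_le.1 h2'
    have hfinal : |a| ≤ 5*|a|/8 := by
      apply abs_le.2
      constructor <;> linarith
    linarith
  -- conclude
  have hs₀val : s₀ = -1 ∨ s₀ = 0 ∨ s₀ = 1 := by
    have h : s₀*(s₀ - 1)*(s₀ + 1) = 0 := by linear_combination hcube
    rcases mul_eq_zero.1 h with h' | h'
    · rcases mul_eq_zero.1 h' with h'' | h''
      · right; left; exact h''
      · right; right; linarith [sub_eq_zero.1 h'']
    · left; linarith [add_eq_zero_iff_eq_neg.1 h']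
  refine ⟨s₀, ?_, hφtend, hf0⟩
  rcases hs₀val with h | h | h <;> simp [h]
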